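/- Let G be a simple graph with vertex set V, let W ⊆ V be a minimal vertex cover of G, and let s be a natural number. Then W × {0,...,s} is a minimal vertex cover of the jet graph J_s(G). -/

import Mathlib

/-- The jet graph of order `s` of a simple graph `G`: vertices are pairs `(v, i)`
with `i ∈ {0,…,s}`, and `(a,i)` is adjacent to `(b,j)` iff `G.Adj a b` and `i + j ≤ s`. -/
def jetGraph {V : Type*} (G : SimpleGraph V) (s : ℕ) : SimpleGraph (V × Fin (s + 1)) where
  Adj p q := G.Adj p.1 q.1 ∧ p.2.val + q.2.val ≤ s
  symm := by
    constructor
    intro p q h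
    exact ⟨h.1.symm, by have := h.2; omega⟩
  loopless := by
    constructor
    intro p h
    exact G.irrefl h.1

/-- `C` is a vertex cover of `H`. -/
def IsVertexCover {W : Type*} (H : SimpleGraph W) (C : Set W) : Prop :=
  ∀ a b : W, H.Adj a b → a ∈ C ∨ b ∈ C

/-- `C` is a minimal vertex cover of `H`. -/
def IsMinimalVertexCover {W : Type*} (H : SimpleGraph W) (C : Set W) : Prop :=
  IsVertexCover H C ∧ ∀ D : Set W, D ⊂ C → ¬ IsVertexCover H D

theorem jetGraph_minimal_cover_of_minimal_cover {V : Type*} (G : SimpleGraph V)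
    (W : Set V) (hW : IsMinimalVertexCover G W) (s : ℕ) :
    IsMinimalVertexCover (jetGraph G s) {p : V × Fin (s + 1) | p.1 ∈ W} := by
  obtain ⟨hcov, hmin⟩ := hW
  constructor
  · intro a b hab
    exact hcov a.1 b.1 hab.1
  · intro D hD hDcov
    have hsub := hD.subset
    obtain ⟨p, hpW, hpD⟩ := (Set.ssubset_iff_of_subset hsub).mp hD
    -- p.1 ∈ W, p ∉ D. W \ {p.1} is not a cover, get a bad edge.
    have hnot := hmin (W \ {p.1}) ⟨Set.diff_subset, fun h => (h hpW).2 rfl⟩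
    rw [IsVertexCover] at hnot
    push_neg at hnot
    obtain ⟨a, b, hab, haD, hbD⟩ := hnot
    -- one of a,b equals p.1, the other ∉ W
    have key : ∀ x y : V, G.Adj x y → x = p.1 → y ∉ W → False := by
      intro x y hxy hx hy
      have h1 : (jetGraph G s).Adj (x, p.2) (y, 0) := ⟨hxy, by simp [hx]; omega⟩
      rcases hDcov _ _ h1 with h | h
      · subst hx
        exact hpD (by simpa using h)
      · exact hy (hsub h)
    rcases hcov a b hab with haW | hbW
    · have ha : a = p.1 := by
        by_contra h; exact haD ⟨haW, h⟩
      have hb : b ∉ W := by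
        intro h
        have hb' : b ≠ p.1 := fun e => G.loopless.irrefl a (by rw [ha, ← e] at hab ⊢; exact hab)
        exact hbD ⟨h, hb'⟩
      exact key a b hab ha hb
    · have hb : b = p.1 := by
        by_contra h; exact hbD ⟨hbW, h⟩
      have ha : a ∉ W := by
        intro h
        have ha' : a ≠ p.1 := fun e => G.loopless.irrefl b (by rw [hb, ← e] at hab ⊢; exact hab)
        exact haD ⟨h, ha'⟩
      exact key b a hab.symm hb ha
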